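/- Let X and Z be finite sets, and let P_{XZ} be a probability distribution on X × Z such that its X-marginal P_X satisfies P_X(x) > 0 for every x ∈ X; let P_{Z|X}(z|x) := P_{XZ}(x,z)/P_X(x) and let P_Z be the Z-marginal of P_{XZ}. Let 𝒜 = (X₁,...,X_L) be i.i.d. P_X-distributed random variables and set P_{Z|𝒜}(z) := (1/L)·Σ_{i=1}^{L} P_{Z|X}(z|Xᵢ). Then for every γ > 0 and every fully supported probability distribution Q_Z on Z, E[ d(P_{Z|𝒜}, P_Z) ] ≤ E_γ(P_{XZ}, Q_X^unif × Q_Z) + (1/2)·√( (γ/L)·E_{(X̃,Z)~Q_X^unif·P_{Z|X}}[ exp(−|ı(X̃;Z) − log γ|) ] ), where the expectation in the second term is with respect to X̃ uniform on X and Z ~ P_{Z|X}(·|X̃). -/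

import Mathlib

open Finset

noncomputable section

/-- Total variation distance between two finitely supported distributions. -/
def tv {A : Type*} [Fintype A] (P Q : A → ℝ) : ℝ := (1 / 2) * ∑ a, |P a - Q a|

/-- The `E_γ` metric `E_γ(P,Q) = ∑_a max (P a − γ·Q a) 0`. -/
def Egamma {A : Type*} [Fintype A] (γ : ℝ) (P Q : A → ℝ) : ℝ :=
  ∑ a, max (P a - γ * Q a) 0


lemma aux_sum_prod {X : Type*} [Fintype X] {L : ℕ} (f : Fin L → X → ℝ) :
    ∑ v : Fin L → X, ∏ i, f i (v i) = ∏ i, ∑ x, f i x :=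
  (Fintype.prod_sum f).symm

lemma first_moment {X : Type*} [Fintype X] {L : ℕ} (P : X → ℝ) (hP : ∑ x, P x = 1)
    (f : X → ℝ) (i0 : Fin L) :
    ∑ v : Fin L → X, (∏ i, P (v i)) * f (v i0) = ∑ x, P x * f x := by
  have h1 : ∀ v : Fin L → X, (∏ i, P (v i)) * f (v i0)
      = ∏ i, (P (v i) * if i0 = i then f (v i) else 1) := by
    intro v
    rw [Finset.prod_mul_distrib, Finset.prod_ite_eq, if_pos (Finset.mem_univ _)]
  simp_rw [h1]
  rw [aux_sum_prod (fun i x => P x * if i0 = i then f x else 1)]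
  have h2 : ∀ i : Fin L, (∑ x, P x * if i0 = i then f x else 1)
      = if i0 = i then ∑ x, P x * f x else 1 := by
    intro i; split <;> simp [hP]
  simp_rw [h2]
  rw [Finset.prod_ite_eq, if_pos (Finset.mem_univ _)]

lemma second_moment {X : Type*} [Fintype X] {L : ℕ} (P : X → ℝ) (hP : ∑ x, P x = 1)
    (f : X → ℝ) (i0 j0 : Fin L) :
    ∑ v : Fin L → X, (∏ i, P (v i)) * (f (v i0) * f (v j0))
      = if i0 = j0 then ∑ x, P x * f x ^ 2 else (∑ x, P x * f x) ^ 2 := by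
  by_cases hij : i0 = j0
  · subst hij
    rw [if_pos rfl]
    have := first_moment P hP (fun x => f x * f x) i0
    simp_rw [← sq] at this
    simpa [sq] using this
  · rw [if_neg hij]
    have h1 : ∀ v : Fin L → X, (∏ i, P (v i)) * (f (v i0) * f (v j0))
        = ∏ i, (P (v i) * ((if i0 = i then f (v i) else 1) * (if j0 = i then f (v i) else 1))) := by
      intro v
      rw [Finset.prod_mul_distrib, Finset.prod_mul_distrib,
        Finset.prod_ite_eq, Finset.prod_ite_eq, if_pos (Finset.mem_univ _),
        if_pos (Finset.mem_univ _)]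
      try ring
    simp_rw [h1]
    rw [aux_sum_prod (fun i x => P x * ((if i0 = i then f x else 1) * (if j0 = i then f x else 1)))]
    have h2 : ∀ i : Fin L, (∑ x, P x * ((if i0 = i then f x else 1) * (if j0 = i then f x else 1)))
        = (if i0 = i then ∑ x, P x * f x else 1) * (if j0 = i then ∑ x, P x * f x else 1) := by
      intro i
      by_cases hi : i0 = i
      · have hj : ¬ j0 = i := fun h => hij (hi.trans h.symm)
        simp [hi, hj, hP]
      · by_cases hj : j0 = i
        · simp [hi, hj, hP]
        · simp [hi, hj, hP]
    simp_rw [h2]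
    rw [Finset.prod_mul_distrib, Finset.prod_ite_eq, Finset.prod_ite_eq,
      if_pos (Finset.mem_univ _), if_pos (Finset.mem_univ _)]
    try rw [sq]

lemma sum_w_eq_one {X : Type*} [Fintype X] {L : ℕ} (P : X → ℝ) (hP : ∑ x, P x = 1) :
    ∑ v : Fin L → X, (∏ i, P (v i)) = 1 := by
  rw [aux_sum_prod (fun _ x => P x)]
  simp [hP]

lemma variance_le {X : Type*} [Fintype X] {L : ℕ} (hL : 0 < L) (P : X → ℝ)
    (hP : ∑ x, P x = 1) (f : X → ℝ) :
    ∑ v : Fin L → X, (∏ i, P (v i)) * ((L : ℝ)⁻¹ * (∑ i, f (v i)) - ∑ x, P x * f x) ^ 2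
      ≤ (∑ x, P x * f x ^ 2) / L := by
  set μ := ∑ x, P x * f x with hμ
  set s := ∑ x, P x * f x ^ 2 with hs
  have hLpos : (0:ℝ) < L := Nat.cast_pos.mpr hL
  -- first moment of the sum
  have hm1 : ∑ v : Fin L → X, (∏ i, P (v i)) * (∑ i, f (v i)) = L * μ := by
    simp_rw [Finset.mul_sum]
    rw [Finset.sum_comm]
    simp_rw [first_moment P hP f]
    simp [mul_comm]
    exact Or.inl rfl
  -- second moment of the sum
  have hm2 : ∑ v : Fin L → X, (∏ i, P (v i)) * (∑ i, f (v i)) ^ 2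
      = L * s + ((L:ℝ)^2 - L) * μ ^ 2 := by
    have expand : ∀ v : Fin L → X, (∏ i, P (v i)) * (∑ i, f (v i)) ^ 2
        = ∑ i, ∑ j, (∏ k, P (v k)) * (f (v i) * f (v j)) := by
      intro v
      rw [sq, Finset.sum_mul_sum]
      rw [Finset.mul_sum]
      congr 1; ext i
      rw [Finset.mul_sum]
    simp_rw [expand]
    rw [Finset.sum_comm]
    have : ∀ i : Fin L, ∑ v : Fin L → X, ∑ j, (∏ k, P (v k)) * (f (v i) * f (v j))
        = ∑ j, ∑ v : Fin L → X, (∏ k, P (v k)) * (f (v i) * f (v j)) := by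
      intro i; exact Finset.sum_comm
    simp_rw [this, second_moment P hP f]
    have : ∀ i : Fin L, ∑ j : Fin L, (if i = j then s else μ ^ 2)
        = μ^2 * L + (s - μ^2) := by
      intro i
      have : ∀ j : Fin L, (if i = j then s else μ ^ 2) = μ^2 + (if i = j then s - μ^2 else 0) := by
        intro j; split <;> ring
      simp_rw [this]
      rw [Finset.sum_add_distrib, Finset.sum_ite_eq, if_pos (Finset.mem_univ _)]
      simp [mul_comm]
    rw [← hs, ← hμ]
    simp_rw [this]
    simp
    ring
  have key : ∑ v : Fin L → X, (∏ i, P (v i)) * ((L : ℝ)⁻¹ * (∑ i, f (v i)) - μ) ^ 2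
      = (s - μ^2) / L := by
    have expand : ∀ v : Fin L → X, (∏ i, P (v i)) * ((L : ℝ)⁻¹ * (∑ i, f (v i)) - μ) ^ 2
        = ((L:ℝ)⁻¹)^2 * ((∏ i, P (v i)) * (∑ i, f (v i))^2)
          - 2 * μ * (L:ℝ)⁻¹ * ((∏ i, P (v i)) * (∑ i, f (v i)))
          + μ^2 * (∏ i, P (v i)) := by
      intro v; ring
    simp_rw [expand]
    rw [Finset.sum_add_distrib, Finset.sum_sub_distrib, ← Finset.mul_sum, ← Finset.mul_sum,
      ← Finset.mul_sum, hm1, hm2, sum_w_eq_one P hP]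
    field_simp
    ring
  rw [key]
  have hdiv : (s - μ^2)/L ≤ s / L := by
    exact (div_le_div_iff_of_pos_right hLpos).mpr (by nlinarith [sq_nonneg μ])
  exact hdiv

lemma weighted_abs_le_sqrt {A : Type*} [Fintype A] (w Y : A → ℝ) (hw : ∀ a, 0 ≤ w a)
    (hw1 : ∑ a, w a = 1) :
    ∑ a, w a * |Y a| ≤ Real.sqrt (∑ a, w a * (Y a) ^ 2) := by
  have h2 : (∑ a, w a * |Y a|) ^ 2 ≤ ∑ a, w a * (Y a) ^ 2 := by
    have := Finset.sum_mul_sq_le_sq_mul_sq Finset.univ (fun a => Real.sqrt (w a))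
      (fun a => Real.sqrt (w a) * |Y a|)
    have e1 : ∀ a : A, Real.sqrt (w a) * (Real.sqrt (w a) * |Y a|) = w a * |Y a| := by
      intro a; rw [← mul_assoc, Real.mul_self_sqrt (hw a)]
    have e2 : ∀ a : A, Real.sqrt (w a) ^ 2 = w a := fun a => Real.sq_sqrt (hw a)
    have e3 : ∀ a : A, (Real.sqrt (w a) * |Y a|) ^ 2 = w a * Y a ^ 2 := by
      intro a; rw [mul_pow, Real.sq_sqrt (hw a), sq_abs]
    simp_rw [e1, e2, e3, hw1, one_mul] at this
    exact this
  have hnn : 0 ≤ ∑ a, w a * |Y a| :=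
    Finset.sum_nonneg fun a _ => mul_nonneg (hw a) (abs_nonneg _)
  calc ∑ a, w a * |Y a| = Real.sqrt ((∑ a, w a * |Y a|) ^ 2) := (Real.sqrt_sq hnn).symm
    _ ≤ Real.sqrt (∑ a, w a * (Y a) ^ 2) := Real.sqrt_le_sqrt h2

lemma sum_sqrt_le_sqrt_sum {A : Type*} [Fintype A] (u c : A → ℝ) (hu : ∀ a, 0 ≤ u a)
    (hc : ∀ a, 0 ≤ c a) (hu1 : ∑ a, u a = 1) :
    ∑ a, Real.sqrt (u a * c a) ≤ Real.sqrt (∑ a, c a) := by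
  have h2 : (∑ a, Real.sqrt (u a * c a)) ^ 2 ≤ ∑ a, c a := by
    have := Finset.sum_mul_sq_le_sq_mul_sq Finset.univ (fun a => Real.sqrt (u a))
      (fun a => Real.sqrt (c a))
    have e1 : ∀ a : A, Real.sqrt (u a) * Real.sqrt (c a) = Real.sqrt (u a * c a) := by
      intro a; rw [Real.sqrt_mul (hu a)]
    have e2 : ∀ a : A, Real.sqrt (u a) ^ 2 = u a := fun a => Real.sq_sqrt (hu a)
    have e3 : ∀ a : A, Real.sqrt (c a) ^ 2 = c a := fun a => Real.sq_sqrt (hc a)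
    simp_rw [e1, e2, e3, hu1, one_mul] at this
    exact this
  have hnn : 0 ≤ ∑ a, Real.sqrt (u a * c a) :=
    Finset.sum_nonneg fun a _ => Real.sqrt_nonneg _
  calc ∑ a, Real.sqrt (u a * c a) = Real.sqrt ((∑ a, Real.sqrt (u a * c a)) ^ 2) :=
      (Real.sqrt_sq hnn).symm
    _ ≤ Real.sqrt (∑ a, c a) := Real.sqrt_le_sqrt h2

lemma exp_neg_abs_log_sub (a b : ℝ) (ha : 0 < a) (hb : 0 < b) :
    Real.exp (-|Real.log a - Real.log b|) = min a b / max a b := by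
  rcases le_total a b with hab | hab
  · have h1 : Real.log a ≤ Real.log b := Real.log_le_log ha hab
    rw [abs_of_nonpos (by linarith), min_eq_left hab, max_eq_right hab, neg_neg,
      Real.exp_sub, Real.exp_log ha, Real.exp_log hb]
  · have h1 : Real.log b ≤ Real.log a := Real.log_le_log hb hab
    rw [abs_of_nonneg (by linarith), min_eq_right hab, max_eq_left hab, neg_sub,
      Real.exp_sub, Real.exp_log hb, Real.exp_log ha]

lemma min_sq_eq (a b : ℝ) (ha : 0 < a) (hb : 0 < b) :
    (min a b) ^ 2 = a * b * (min a b / max a b) := by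
  rcases le_total a b with hab | hab
  · rw [min_eq_left hab, max_eq_right hab]; field_simp
  · rw [min_eq_right hab, max_eq_left hab]; field_simp

lemma swap_one {V Z : Type*} [Fintype V] [Fintype Z] (w : V → ℝ) (F : V → Z → ℝ) (c : ℝ) :
    ∑ v, w v * (c * ∑ z, F v z) = c * ∑ z, ∑ v, w v * F v z := by
  calc ∑ v, w v * (c * ∑ z, F v z) = ∑ v, ∑ z, c * (w v * F v z) := by
        refine Finset.sum_congr rfl fun v _ => ?_
        rw [Finset.mul_sum, Finset.mul_sum]
        exact Finset.sum_congr rfl fun z _ => by ring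
    _ = ∑ z, ∑ v, c * (w v * F v z) := Finset.sum_comm
    _ = c * ∑ z, ∑ v, w v * F v z := by
        rw [Finset.mul_sum]
        exact Finset.sum_congr rfl fun z _ => (Finset.mul_sum _ _ _).symm

/-- expectation bound with an abstract decomposition `PZX = m/P + e/P`. -/
lemma engine {X Z : Type*} [Fintype X] [Fintype Z] {L : ℕ} (hL : 0 < L)
    (P : X → ℝ) (hPpos : ∀ x, 0 < P x) (hPsum : ∑ x, P x = 1)
    (PZX : X → Z → ℝ) (PZ : Z → ℝ)
    (m e : X → Z → ℝ) (hm0 : ∀ x z, 0 ≤ m x z) (he0 : ∀ x z, 0 ≤ e x z)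
    (hsplit : ∀ x z, PZX x z = m x z / P x + e x z / P x)
    (hPZdef : ∀ z, PZ z = ∑ x, (m x z + e x z)) :
    ∑ v : Fin L → X, (∏ i, P (v i)) *
        ((1 / 2 : ℝ) * ∑ z, |(L : ℝ)⁻¹ * (∑ i, PZX (v i) z) - PZ z|)
      ≤ (∑ z, ∑ x, e x z)
        + (1 / 2) * ∑ z, Real.sqrt ((∑ x, (m x z) ^ 2 / P x) / L) := by
  classical
  have hLR : (0:ℝ) < L := Nat.cast_pos.mpr hL
  have hw0 : ∀ v : Fin L → X, 0 ≤ ∏ i, P (v i) :=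
    fun v => Finset.prod_nonneg fun i _ => (hPpos _).le
  have hw1 : ∑ v : Fin L → X, (∏ i, P (v i)) = 1 := sum_w_eq_one P hPsum
  have hcancel : ∀ x z, P x * (m x z / P x) = m x z := by
    intro x z; rw [mul_comm, div_mul_cancel₀ _ (hPpos x).ne']
  have hcancelE : ∀ x z, P x * (e x z / P x) = e x z := by
    intro x z; rw [mul_comm, div_mul_cancel₀ _ (hPpos x).ne']
  -- pointwise bound on tv
  have hptw : ∀ v : Fin L → X,
      (1 / 2 : ℝ) * ∑ z, |(L : ℝ)⁻¹ * (∑ i, PZX (v i) z) - PZ z|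
        ≤ (1/2) * ∑ z, |(L : ℝ)⁻¹ * (∑ i, m (v i) z / P (v i)) - ∑ x, P x * (m x z / P x)|
          + (1/2) * ∑ z, ((L : ℝ)⁻¹ * (∑ i, e (v i) z / P (v i)) + ∑ x, e x z) := by
    intro v
    rw [← mul_add]
    apply mul_le_mul_of_nonneg_left _ (by norm_num)
    rw [← Finset.sum_add_distrib]
    apply Finset.sum_le_sum
    intro z _
    have hrw : (L : ℝ)⁻¹ * (∑ i, PZX (v i) z) - PZ z
        = ((L : ℝ)⁻¹ * (∑ i, m (v i) z / P (v i)) - ∑ x, P x * (m x z / P x))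
          + ((L : ℝ)⁻¹ * (∑ i, e (v i) z / P (v i)) - ∑ x, e x z) := by
      simp_rw [hsplit, hPZdef, hcancel]
      rw [Finset.sum_add_distrib, Finset.sum_add_distrib]
      ring
    rw [hrw]
    refine (abs_add_le _ _).trans ?_
    apply add_le_add_right
    refine (abs_sub _ _).trans ?_
    have h1 : |(L : ℝ)⁻¹ * (∑ i, e (v i) z / P (v i))|
        = (L : ℝ)⁻¹ * (∑ i, e (v i) z / P (v i)) := by
      rw [abs_of_nonneg]
      exact mul_nonneg (by positivity)
        (Finset.sum_nonneg fun i _ => div_nonneg (he0 _ _) (hPpos _).le)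
    have h2 : |∑ x, e x z| = ∑ x, e x z :=
      abs_of_nonneg (Finset.sum_nonneg fun x _ => he0 _ _)
    rw [h1, h2]
  have step1 : ∑ v : Fin L → X, (∏ i, P (v i)) *
        ((1 / 2 : ℝ) * ∑ z, |(L : ℝ)⁻¹ * (∑ i, PZX (v i) z) - PZ z|)
      ≤ ∑ v : Fin L → X, (∏ i, P (v i)) *
        ((1/2) * ∑ z, |(L : ℝ)⁻¹ * (∑ i, m (v i) z / P (v i)) - ∑ x, P x * (m x z / P x)|
          + (1/2) * ∑ z, ((L : ℝ)⁻¹ * (∑ i, e (v i) z / P (v i)) + ∑ x, e x z)) :=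
    Finset.sum_le_sum fun v _ => mul_le_mul_of_nonneg_left (hptw v) (hw0 v)
  refine step1.trans ?_
  -- split the two parts
  have hsplit2 : ∑ v : Fin L → X, (∏ i, P (v i)) *
        ((1/2) * ∑ z, |(L : ℝ)⁻¹ * (∑ i, m (v i) z / P (v i)) - ∑ x, P x * (m x z / P x)|
          + (1/2) * ∑ z, ((L : ℝ)⁻¹ * (∑ i, e (v i) z / P (v i)) + ∑ x, e x z))
      = (1/2) * (∑ z, ∑ v : Fin L → X, (∏ i, P (v i)) *
            |(L : ℝ)⁻¹ * (∑ i, m (v i) z / P (v i)) - ∑ x, P x * (m x z / P x)|)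
        + (1/2) * (∑ z, ∑ v : Fin L → X, (∏ i, P (v i)) *
            ((L : ℝ)⁻¹ * (∑ i, e (v i) z / P (v i)) + ∑ x, e x z)) := by
    simp_rw [mul_add]
    rw [Finset.sum_add_distrib, swap_one, swap_one]
    simp_rw [mul_add]
  rw [hsplit2]
  -- e-part: exact computation
  have hepart : ∀ z, ∑ v : Fin L → X, (∏ i, P (v i)) *
        ((L : ℝ)⁻¹ * (∑ i, e (v i) z / P (v i)) + ∑ x, e x z) = 2 * ∑ x, e x z := by
    intro z
    simp_rw [mul_add, Finset.sum_add_distrib]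
    have hA : ∑ v : Fin L → X, (∏ i, P (v i)) * ((L : ℝ)⁻¹ * (∑ i, e (v i) z / P (v i)))
        = ∑ x, e x z := by
      have e1 : ∀ v : Fin L → X, (∏ i, P (v i)) * ((L : ℝ)⁻¹ * (∑ i, e (v i) z / P (v i)))
          = (L : ℝ)⁻¹ * ∑ i, (∏ j, P (v j)) * (e (v i) z / P (v i)) := by
        intro v
        rw [Finset.mul_sum]
        rw [Finset.mul_sum]
        rw [Finset.mul_sum]
        exact Finset.sum_congr rfl fun i _ => by ring
      simp_rw [e1]
      rw [← Finset.mul_sum, Finset.sum_comm]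
      have e2 : ∀ i : Fin L, ∑ v : Fin L → X, (∏ j, P (v j)) * (e (v i) z / P (v i))
          = ∑ x, e x z := by
        intro i
        rw [first_moment P hPsum (fun x => e x z / P x) i]
        exact Finset.sum_congr rfl fun x _ => hcancelE x z
      simp_rw [e2]
      rw [Finset.sum_const, Finset.card_univ, Fintype.card_fin, nsmul_eq_mul]
      rw [← mul_assoc, inv_mul_cancel₀ hLR.ne', one_mul]
    have hB : ∑ v : Fin L → X, (∏ i, P (v i)) * (∑ x, e x z) = ∑ x, e x z := by
      rw [← Finset.sum_mul, hw1, one_mul]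
    rw [hA, hB]; ring
  -- m-part: variance bound
  have hmpart : ∀ z, ∑ v : Fin L → X, (∏ i, P (v i)) *
        |(L : ℝ)⁻¹ * (∑ i, m (v i) z / P (v i)) - ∑ x, P x * (m x z / P x)|
      ≤ Real.sqrt ((∑ x, (m x z) ^ 2 / P x) / L) := by
    intro z
    have j1 := weighted_abs_le_sqrt (fun v : Fin L → X => ∏ i, P (v i))
      (fun v => (L : ℝ)⁻¹ * (∑ i, m (v i) z / P (v i)) - ∑ x, P x * (m x z / P x)) hw0 hw1
    refine j1.trans (Real.sqrt_le_sqrt ?_)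
    have j2 := variance_le hL P hPsum (fun x => m x z / P x)
    refine j2.trans ?_
    refine le_of_eq ?_
    congr 1
    refine Finset.sum_congr rfl fun x _ => ?_
    rw [div_pow, mul_div_assoc', div_eq_div_iff (pow_ne_zero 2 (hPpos x).ne') (hPpos x).ne']
    ring
  -- combine
  have final1 : (1/2 : ℝ) * (∑ z, ∑ v : Fin L → X, (∏ i, P (v i)) *
        ((L : ℝ)⁻¹ * (∑ i, e (v i) z / P (v i)) + ∑ x, e x z)) = ∑ z, ∑ x, e x z := by
    simp_rw [hepart]
    rw [← Finset.mul_sum, ← mul_assoc]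
    norm_num
  rw [final1]
  rw [add_comm ((1:ℝ)/2 * _)]
  apply add_le_add_right
  apply mul_le_mul_of_nonneg_left _ (by norm_num : (0:ℝ) ≤ 1/2)
  exact Finset.sum_le_sum fun z _ => hmpart z

lemma pointwise_sq (γ : ℝ) (hγ : 0 < γ) (a Q P : ℝ) (ha : 0 ≤ a) (hQ : 0 < Q) (hP : 0 < P) :
    (min a (γ * Q)) ^ 2 / P = γ * Q * ((a / P) * Real.exp (-|Real.log (a / Q) - Real.log γ|)) := by
  by_cases hz : a = 0
  · rw [hz, min_eq_left (mul_pos hγ hQ).le]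
    simp
  · have ha' : 0 < a := ha.lt_of_ne' hz
    have hb : 0 < γ * Q := mul_pos hγ hQ
    have hlog : Real.log (a / Q) - Real.log γ = Real.log a - Real.log (γ * Q) := by
      rw [Real.log_div hz hQ.ne', Real.log_mul hγ.ne' hQ.ne']; ring
    rw [hlog, exp_neg_abs_log_sub a (γ * Q) ha' hb, min_sq_eq a (γ * Q) ha' hb]
    have hmax : max a (γ * Q) ≠ 0 := (lt_max_of_lt_left ha').ne'
    field_simp

/-- channel resolvability: for a codebook `𝒜 = (X₁,…,X_L)` of i.i.d.
`P_X`-distributed codewords,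
`E[d(P_{Z|𝒜}, P_Z)] ≤ E_γ(P_{XZ}, Q_X^unif × Q_Z)
  + (1/2)·√((γ/L)·E_{Q_X^unif·P_{Z|X}}[exp(−|ı(X̃;Z) − log γ|)])`,
where `P_X(x) = ∑_z P_{XZ}(x,z) > 0`, `P_{Z|X}(z|x) = P_{XZ}(x,z)/P_X(x)`, and
`ı(x;z) = log(P_{XZ}(x,z)/(Q_X^unif(x)·Q_Z(z)))`. -/
theorem channel_resolvability
    {X Z : Type*} [Fintype X] [Fintype Z] [Nonempty X]
    (PXZ : X × Z → ℝ)
    (hpos : ∀ q, 0 ≤ PXZ q) (hsum : ∑ q, PXZ q = 1)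
    (hXpos : ∀ x, 0 < ∑ z, PXZ (x, z))
    (PZX : X → Z → ℝ)
    (hPZX : ∀ x z, PZX x z = PXZ (x, z) / ∑ z', PXZ (x, z'))
    (PZ : Z → ℝ) (hPZ : ∀ z, PZ z = ∑ x, PXZ (x, z))
    (L : ℕ) (hL : 0 < L)
    (γ : ℝ) (hγ : 0 < γ)
    (QZ : Z → ℝ) (hQpos : ∀ z, 0 < QZ z) (hQsum : ∑ z, QZ z = 1) :
    ∑ v : Fin L → X, (∏ i, ∑ z, PXZ (v i, z)) *
        tv (fun z => (L : ℝ)⁻¹ * ∑ i, PZX (v i) z) PZ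
      ≤ Egamma γ PXZ (fun q : X × Z => (Fintype.card X : ℝ)⁻¹ * QZ q.2)
        + (1 / 2) * Real.sqrt ((γ / (L : ℝ)) *
            ∑ q : X × Z, (Fintype.card X : ℝ)⁻¹ * PZX q.1 q.2 *
              Real.exp (-|Real.log (PXZ q / ((Fintype.card X : ℝ)⁻¹ * QZ q.2))
                - Real.log γ|)) := by
  classical
  have hcardX : (0:ℝ) < (Fintype.card X : ℝ) := by exact_mod_cast Fintype.card_pos
  have hQ2pos : ∀ z : Z, 0 < (Fintype.card X : ℝ)⁻¹ * QZ z :=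
    fun z => mul_pos (inv_pos.mpr hcardX) (hQpos z)
  have hLR : (0:ℝ) < L := Nat.cast_pos.mpr hL
  have hPsum : ∑ x, ∑ z, PXZ (x, z) = 1 := by rw [← Fintype.sum_prod_type]; exact hsum
  have hme : ∀ (x : X) (z : Z), min (PXZ (x, z)) (γ * ((Fintype.card X : ℝ)⁻¹ * QZ z))
      + max (PXZ (x, z) - γ * ((Fintype.card X : ℝ)⁻¹ * QZ z)) 0 = PXZ (x, z) := by
    intro x z
    rcases le_total (PXZ (x, z)) (γ * ((Fintype.card X : ℝ)⁻¹ * QZ z)) with hab | hab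
    · rw [min_eq_left hab, max_eq_right (sub_nonpos.mpr hab), add_zero]
    · rw [min_eq_right hab, max_eq_left (sub_nonneg.mpr hab)]; ring
  have hsplit' : ∀ (x : X) (z : Z), PZX x z
      = min (PXZ (x, z)) (γ * ((Fintype.card X : ℝ)⁻¹ * QZ z)) / (∑ z', PXZ (x, z'))
        + max (PXZ (x, z) - γ * ((Fintype.card X : ℝ)⁻¹ * QZ z)) 0 / (∑ z', PXZ (x, z')) := by
    intro x z
    rw [hPZX, ← add_div, hme]
  have hPZdef' : ∀ z : Z, PZ z = ∑ x, (min (PXZ (x, z)) (γ * ((Fintype.card X : ℝ)⁻¹ * QZ z))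
      + max (PXZ (x, z) - γ * ((Fintype.card X : ℝ)⁻¹ * QZ z)) 0) := by
    intro z
    rw [hPZ]
    exact Finset.sum_congr rfl fun x _ => (hme x z).symm
  have key := engine hL (fun x => ∑ z, PXZ (x, z)) hXpos hPsum PZX PZ
    (fun x z => min (PXZ (x, z)) (γ * ((Fintype.card X : ℝ)⁻¹ * QZ z)))
    (fun x z => max (PXZ (x, z) - γ * ((Fintype.card X : ℝ)⁻¹ * QZ z)) 0)
    (fun x z => le_min (hpos _) (mul_pos hγ (hQ2pos z)).le)
    (fun x z => le_max_right _ _)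
    hsplit' hPZdef'
  have lhs_eq : ∑ v : Fin L → X, (∏ i, ∑ z, PXZ (v i, z)) *
        tv (fun z => (L : ℝ)⁻¹ * ∑ i, PZX (v i) z) PZ
      = ∑ v : Fin L → X, (∏ i, ∑ z, PXZ (v i, z)) *
        ((1 / 2 : ℝ) * ∑ z, |(L : ℝ)⁻¹ * (∑ i, PZX (v i) z) - PZ z|) := rfl
  rw [lhs_eq]
  refine key.trans ?_
  apply add_le_add
  · -- e-part equals Egamma
    apply le_of_eq
    rw [Egamma, Fintype.sum_prod_type]
    exact Finset.sum_comm
  · -- m-part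
    apply mul_le_mul_of_nonneg_left _ (by norm_num : (0:ℝ) ≤ 1/2)
    set S : Z → ℝ := fun z => ∑ x, (Fintype.card X : ℝ)⁻¹ * PZX x z *
        Real.exp (-|Real.log (PXZ (x, z) / ((Fintype.card X : ℝ)⁻¹ * QZ z)) - Real.log γ|)
      with hSdef
    have hS0 : ∀ z, 0 ≤ S z := by
      intro z
      refine Finset.sum_nonneg fun x _ => ?_
      have hPZX0 : 0 ≤ PZX x z := by
        rw [hPZX]; exact div_nonneg (hpos _) (hXpos x).le
      positivity
    have hins : ∀ z : Z, (∑ x, (min (PXZ (x, z)) (γ * ((Fintype.card X : ℝ)⁻¹ * QZ z))) ^ 2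
          / (∑ z', PXZ (x, z'))) / (L : ℝ)
        = QZ z * ((γ / L) * S z) := by
      intro z
      rw [hSdef, Finset.sum_div, Finset.mul_sum, Finset.mul_sum]
      refine Finset.sum_congr rfl fun x _ => ?_
      rw [hPZX x z,
        pointwise_sq γ hγ (PXZ (x, z)) ((Fintype.card X : ℝ)⁻¹ * QZ z) (∑ z', PXZ (x, z'))
          (hpos _) (hQ2pos z) (hXpos x)]
      ring
    calc ∑ z, Real.sqrt ((∑ x, (min (PXZ (x, z)) (γ * ((Fintype.card X : ℝ)⁻¹ * QZ z))) ^ 2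
            / (∑ z', PXZ (x, z'))) / (L : ℝ))
        = ∑ z, Real.sqrt (QZ z * ((γ / L) * S z)) := by
          exact Finset.sum_congr rfl fun z _ => by rw [hins z]
      _ ≤ Real.sqrt (∑ z, (γ / L) * S z) := by
          refine sum_sqrt_le_sqrt_sum QZ (fun z => (γ / L) * S z) (fun z => (hQpos z).le)
            (fun z => mul_nonneg (div_nonneg hγ.le hLR.le) (hS0 z)) hQsum
      _ = Real.sqrt ((γ / (L : ℝ)) *
            ∑ q : X × Z, (Fintype.card X : ℝ)⁻¹ * PZX q.1 q.2 *
              Real.exp (-|Real.log (PXZ q / ((Fintype.card X : ℝ)⁻¹ * QZ q.2))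
                - Real.log γ|)) := by
          rw [← Finset.mul_sum]
          congr 1
          rw [show (∑ q : X × Z, (Fintype.card X : ℝ)⁻¹ * PZX q.1 q.2 *
              Real.exp (-|Real.log (PXZ q / ((Fintype.card X : ℝ)⁻¹ * QZ q.2)) - Real.log γ|))
            = ∑ x, ∑ z, (Fintype.card X : ℝ)⁻¹ * PZX x z *
              Real.exp (-|Real.log (PXZ (x, z) / ((Fintype.card X : ℝ)⁻¹ * QZ z)) - Real.log γ|)
            from Fintype.sum_prod_type _]
          congr 1
          simp only [hSdef]
          exact Finset.sum_comm (s := Finset.univ) (t := Finset.univ)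
            (f := fun z x => (Fintype.card X : ℝ)⁻¹ * PZX x z *
              Real.exp (-|Real.log (PXZ (x, z) / ((Fintype.card X : ℝ)⁻¹ * QZ z)) - Real.log γ|))
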